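/- Let B(z) = z (z - a_1)(z - a_2)/((1 - conj(a_1) z)(1 - conj(a_2) z)) be a canonical Blaschke product of degree 3. If z_1 ≠ z_2 lie on the unit circle with B(z_1) = B(z_2) and z_1 + z_2 ≠ 0, then the intersection point z of the tangent lines to the unit circle at z_1 and z_2 satisfies conj(a_1) conj(a_2) z² − (|a_1 a_2|² − |a_1 + a_2|² + 1) z conj(z) + a_1 a_2 conj(z)² − 2(conj(a_1) + conj(a_2)) z − 2(a_1 + a_2) conj(z) + 4 = 0. -/

import Mathlib

open Complex

theorem exterior_curve_deg3 (a₁ a₂ : ℂ)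
    (ha₁ : ‖a₁‖ < 1) (ha₂ : ‖a₂‖ < 1)
    (B : ℂ → ℂ)
    (hB : ∀ z, B z = z * ((z - a₁) * (z - a₂)) /
      ((1 - (starRingEnd ℂ) a₁ * z) * (1 - (starRingEnd ℂ) a₂ * z)))
    (z₁ z₂ : ℂ) (hz₁ : ‖z₁‖ = 1) (hz₂ : ‖z₂‖ = 1)
    (hne : z₁ ≠ z₂) (hsum : z₁ + z₂ ≠ 0) (heq : B z₁ = B z₂)
    (z : ℂ) (hz : z = 2 * z₁ * z₂ / (z₁ + z₂)) :
    (starRingEnd ℂ) a₁ * (starRingEnd ℂ) a₂ * z ^ 2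
      - (((‖a₁ * a₂‖ : ℝ) ^ 2 - (‖a₁ + a₂‖ : ℝ) ^ 2 + 1) : ℂ)
          * z * (starRingEnd ℂ) z
      + a₁ * a₂ * ((starRingEnd ℂ) z) ^ 2
      - 2 * ((starRingEnd ℂ) a₁ + (starRingEnd ℂ) a₂) * z
      - 2 * (a₁ + a₂) * (starRingEnd ℂ) z + 4 = 0 := by
  set c₁ := (starRingEnd ℂ) a₁ with hc₁
  set c₂ := (starRingEnd ℂ) a₂ with hc₂
  -- nonvanishing of denominators
  have hden : ∀ (a w : ℂ), ‖a‖ < 1 → ‖w‖ = 1 →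
      (1 - (starRingEnd ℂ) a * w) ≠ 0 := by
    intro a w ha hw h
    have : (starRingEnd ℂ) a * w = 1 := by linear_combination -h
    have habs : ‖(starRingEnd ℂ) a * w‖ = 1 := by rw [this, norm_one]
    rw [norm_mul, Complex.norm_conj, hw, mul_one] at habs
    exact absurd habs (ne_of_lt ha)
  have hd11 := hden a₁ z₁ ha₁ hz₁
  have hd12 := hden a₁ z₂ ha₁ hz₂
  have hd21 := hden a₂ z₁ ha₂ hz₁
  have hd22 := hden a₂ z₂ ha₂ hz₂
  have h1 : z₁ * (starRingEnd ℂ) z₁ = 1 := by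
    rw [Complex.mul_conj, show Complex.normSq z₁ = 1 by
      rw [← Complex.sq_norm, hz₁]; norm_num]; norm_num
  have h2 : z₂ * (starRingEnd ℂ) z₂ = 1 := by
    rw [Complex.mul_conj, show Complex.normSq z₂ = 1 by
      rw [← Complex.sq_norm, hz₂]; norm_num]; norm_num
  have hz₁0 : z₁ ≠ 0 := by intro h; rw [h] at h1; simp at h1
  have hz₂0 : z₂ ≠ 0 := by intro h; rw [h] at h2; simp at h2
  -- cleared version of heq
  rw [hB z₁, hB z₂, div_eq_div_iff (mul_ne_zero hd11 hd21) (mul_ne_zero hd12 hd22)] at heq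
  -- key symmetric relation
  have hd := sub_ne_zero.mpr hne
  have key : (z₁ + z₂)^2 - z₁*z₂ - (c₁ + c₂) * (z₁*z₂) * (z₁+z₂) + c₁*c₂*(z₁*z₂)^2
      - (a₁+a₂)*(z₁+z₂) + (a₁+a₂)*(c₁+c₂)*(z₁*z₂) + a₁*a₂ - a₁*a₂*c₁*c₂*(z₁*z₂) = 0 := by
    apply mul_left_cancel₀ hd
    rw [mul_zero]
    linear_combination heq
  -- compute conj z
  have hconj : (starRingEnd ℂ) z = 2 / (z₁ + z₂) := by
    rw [hz]
    rw [map_div₀, map_add, map_mul, map_mul, map_ofNat]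
    rw [div_eq_div_iff, ]
    · linear_combination 2 * (starRingEnd ℂ) z₂ * h1 + 2 * (starRingEnd ℂ) z₁ * h2
    · intro h
      have h' : z₁ * z₂ * ((starRingEnd ℂ) z₁ + (starRingEnd ℂ) z₂) = 0 := by
        rw [h, mul_zero]
      have : z₂ + z₁ = 0 := by linear_combination h' - z₂ * h1 - z₁ * h2
      exact hsum (by linear_combination this)
    · exact hsum
  -- rewrite abs terms
  have habs1 : ((‖a₁ * a₂‖ : ℝ) : ℂ)^2 = (a₁ * a₂) * (c₁ * c₂) := by
    calc ((‖a₁ * a₂‖ : ℝ) : ℂ)^2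
        = (((‖a₁ * a₂‖)^2 : ℝ) : ℂ) := by push_cast; ring
      _ = ((Complex.normSq (a₁ * a₂) : ℝ) : ℂ) := by rw [Complex.sq_norm]
      _ = (a₁ * a₂) * (starRingEnd ℂ) (a₁ * a₂) := (Complex.mul_conj _).symm
      _ = (a₁ * a₂) * (c₁ * c₂) := by rw [map_mul]
  have habs2 : ((‖a₁ + a₂‖ : ℝ) : ℂ)^2 = (a₁ + a₂) * (c₁ + c₂) := by
    calc ((‖a₁ + a₂‖ : ℝ) : ℂ)^2
        = (((‖a₁ + a₂‖)^2 : ℝ) : ℂ) := by push_cast; ring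
      _ = ((Complex.normSq (a₁ + a₂) : ℝ) : ℂ) := by rw [Complex.sq_norm]
      _ = (a₁ + a₂) * (starRingEnd ℂ) (a₁ + a₂) := (Complex.mul_conj _).symm
      _ = (a₁ + a₂) * (c₁ + c₂) := by rw [map_add]
  rw [hconj, hz, habs1, habs2]
  simp only [div_eq_mul_inv]
  have hu : (z₁ + z₂) * (z₁ + z₂)⁻¹ = 1 := mul_inv_cancel₀ hsum
  linear_combination (4 * ((z₁ + z₂)⁻¹)^2) * key
    + (4 * (c₁ + c₂) * (z₁ * z₂) * (z₁ + z₂)⁻¹ + 4 * (a₁ + a₂) * (z₁ + z₂)⁻¹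
        - 4 * ((z₁ + z₂)⁻¹ * (z₁ + z₂) + 1)) * hu
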